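/- (Cartan, 1924; two-dimensional case.) Let V be a real inner product space with dim V = 2. Then 𝒯(V) = 𝒯₁(V); that is, for every trilinear form A : V×V×V → ℝ satisfying A(X,Y,Z) = −A(X,Z,Y) for all X,Y,Z ∈ V there exists a vector v ∈ V such that A(X,Y,Z) = ⟨X,Y⟩⟨v,Z⟩ − ⟨X,Z⟩⟨v,Y⟩ for all X,Y,Z ∈ V. -/

import Mathlib

open scoped RealInnerProductSpace BigOperators

/-- Cartan (1924), two-dimensional case: if `dim V = 2`, then `𝒯(V) = 𝒯₁(V)`, i.e.
every trilinear form that is antisymmetric in its last two arguments is a vectorial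
torsion tensor. -/
theorem cartan_dim_two
    {V : Type*} [NormedAddCommGroup V] [InnerProductSpace ℝ V] [FiniteDimensional ℝ V]
    (hdim : Module.finrank ℝ V = 2)
    (A : V →ₗ[ℝ] V →ₗ[ℝ] V →ₗ[ℝ] ℝ)
    (hA : ∀ X Y Z : V, A X Y Z = - A X Z Y) :
    ∃ v : V, ∀ X Y Z : V, A X Y Z = ⟪X, Y⟫ * ⟪v, Z⟫ - ⟪X, Z⟫ * ⟪v, Y⟫ := by
  classical
  have b : OrthonormalBasis (Fin 2) ℝ V :=
    (stdOrthonormalBasis ℝ V).reindex (finCongr hdim)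
  set e0 := b 0 with he0
  set e1 := b 1 with he1
  have hite : ∀ i j : Fin 2, ⟪b i, b j⟫ = if i = j then 1 else 0 :=
    orthonormal_iff_ite.mp b.orthonormal
  have h00 : ⟪e0, e0⟫ = 1 := (hite 0 0).trans (by simp)
  have h11 : ⟪e1, e1⟫ = 1 := (hite 1 1).trans (by simp)
  have h01 : ⟪e0, e1⟫ = 0 := (hite 0 1).trans (by simp)
  have h10 : ⟪e1, e0⟫ = 0 := (hite 1 0).trans (by simp)
  have hzero : ∀ X Y : V, A X Y Y = 0 := by
    intro X Y
    have := hA X Y Y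
    linarith
  refine ⟨-(A e1 e0 e1) • e0 + (A e0 e0 e1) • e1, ?_⟩
  intro X Y Z
  obtain ⟨x0, x1, rfl⟩ : ∃ a c : ℝ, X = a • e0 + c • e1 := by
    refine ⟨⟪e0, X⟫, ⟪e1, X⟫, ?_⟩
    have := b.sum_repr' X
    rw [Fin.sum_univ_two] at this
    exact this.symm
  obtain ⟨y0, y1, rfl⟩ : ∃ a c : ℝ, Y = a • e0 + c • e1 := by
    refine ⟨⟪e0, Y⟫, ⟪e1, Y⟫, ?_⟩
    have := b.sum_repr' Y
    rw [Fin.sum_univ_two] at this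
    exact this.symm
  obtain ⟨z0, z1, rfl⟩ : ∃ a c : ℝ, Z = a • e0 + c • e1 := by
    refine ⟨⟪e0, Z⟫, ⟪e1, Z⟫, ?_⟩
    have := b.sum_repr' Z
    rw [Fin.sum_univ_two] at this
    exact this.symm
  have a010 : A e0 e1 e0 = -A e0 e0 e1 := by rw [hA]
  have a110 : A e1 e1 e0 = -A e1 e0 e1 := by rw [hA]
  simp only [map_add, map_smul, map_neg, LinearMap.add_apply, LinearMap.smul_apply,
    LinearMap.neg_apply, smul_eq_mul, inner_add_left, inner_add_right,
    inner_smul_left, inner_smul_right, inner_neg_left, inner_neg_right,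
    RCLike.ofReal_real_eq_id, id_eq, RCLike.conj_to_real, conj_trivial, h00, h11, h01, h10,
    hzero, a010, a110]
  ring
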